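/- Every irreducible finite-dimensional Z/2Z-graded representation of sl2 (with the grading on sl2 given by h even and e, f odd) is irreducible as an ungraded representation of sl2. -/

import Mathlib

variable {K V : Type*} [Field K] [AddCommGroup V] [Module K V]

/-- An sl2-triple of linear endomorphisms: [h,e]=2e, [h,f]=-2f, [e,f]=h. -/
def Sl2Rel (e h f : Module.End K V) : Prop :=
  h * e - e * h = 2 • e ∧ h * f - f * h = -(2 • f) ∧ e * f - f * e = h

/-- A submodule invariant under the sl2-action. -/
def Sl2Inv (e h f : Module.End K V) (W : Submodule K V) : Prop :=
  (∀ x ∈ W, e x ∈ W) ∧ (∀ x ∈ W, h x ∈ W) ∧ (∀ x ∈ W, f x ∈ W)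

/-- A Z/2Z-grading V = V0 ⊕ V1 compatible with the graded sl2 (h even, e and f odd). -/
def Sl2Grading (e h f : Module.End K V) (V0 V1 : Submodule K V) : Prop :=
  IsCompl V0 V1 ∧ (∀ x ∈ V0, h x ∈ V0) ∧ (∀ x ∈ V1, h x ∈ V1) ∧
    (∀ x ∈ V0, e x ∈ V1) ∧ (∀ x ∈ V1, e x ∈ V0) ∧
    (∀ x ∈ V0, f x ∈ V1) ∧ (∀ x ∈ V1, f x ∈ V0)

/-- A submodule which is graded with respect to the grading (V0, V1). -/
def Sl2GradedSub (V0 V1 W : Submodule K V) : Prop :=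
  W = (W ⊓ V0) ⊔ (W ⊓ V1)

section Aux

variable {K V : Type*} [Field K] [CharZero K] [AddCommGroup V] [Module K V]

lemma aux_comm_pow' (h f : Module.End K V) (c : K) (hc : h * f - f * h = c • f) :
    ∀ m : ℕ, h * f ^ m = f ^ m * h + ((m : K) * c) • f ^ m := by
  intro m
  induction m with
  | zero => simp
  | succ m ih =>
    have h1 : h * f = f * h + c • f := by rw [← hc]; abel
    rw [pow_succ, ← mul_assoc, ih, add_mul, smul_mul_assoc, mul_assoc, h1, mul_add,
      ← mul_assoc, mul_smul_comm, ← pow_succ]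
    rw [Nat.cast_succ, add_mul, one_mul, add_smul, mul_comm (m:K) c]
    abel

lemma aux_comm_pow (h f : Module.End K V) (c : K) (hc : h * f - f * h = c • f) :
    ∀ m : ℕ, h * f ^ m - f ^ m * h = ((m : K) * c) • f ^ m := by
  intro m
  rw [aux_comm_pow' h f c hc m]
  abel

lemma aux_nilp [FiniteDimensional K V] (h f : Module.End K V) (c : K) (hc : c ≠ 0)
    (hcomm : h * f - f * h = c • f) : ∃ m : ℕ, f ^ m = 0 := by
  by_contra hcon
  push_neg at hcon
  let ad : Module.End K (Module.End K V) :=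
    LinearMap.mulLeft K h - LinearMap.mulRight K h
  have had : ∀ g : Module.End K V, ad g = h * g - g * h := fun g => rfl
  have hev : ∀ m : Fin (Module.finrank K (Module.End K V) + 1),
      ad.HasEigenvector (((m : ℕ) : K) * c) (f ^ (m : ℕ)) := by
    intro m
    refine ⟨Module.End.mem_eigenspace_iff.2 ?_, hcon _⟩
    rw [had]
    exact aux_comm_pow h f c hcomm m
  have hinj : Function.Injective
      (fun m : Fin (Module.finrank K (Module.End K V) + 1) => ((m : ℕ) : K) * c) := by
    intro a b hab
    simp only [mul_eq_mul_right_iff, hc, or_false, Nat.cast_inj] at hab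
    exact Fin.ext hab
  have hli := ad.eigenvectors_linearIndependent' _ hinj _ hev
  have hcard := hli.fintype_card_le_finrank
  simp only [Fintype.card_fin] at hcard
  omega

/-- pointwise: h on strings -/
lemma aux_h_string (h f : Module.End K V) (hr : h * f - f * h = (-2:K) • f) (m : ℕ) (x : V) :
    h ((f ^ m) x) = (f ^ m) (h x) - ((2 : K) * m) • (f ^ m) x := by
  have := LinearMap.congr_fun (aux_comm_pow' h f (-2:K) hr m) x
  simp only [Module.End.mul_apply, LinearMap.add_apply, LinearMap.smul_apply] at this
  rw [this]
  rw [show (m : K) * (-2) = -((2:K) * m) by ring, neg_smul]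
  abel

/-- pointwise: e on strings of a vector killed by e -/
lemma aux_ef_string (e h f : Module.End K V)
    (hef : ∀ x, e (f x) = f (e x) + h x)
    (hr : h * f - f * h = (-2:K) • f)
    {v : V} (hev : e v = 0) :
    ∀ m : ℕ, e ((f ^ (m+1)) v) = ((m:K)+1) • (f ^ m) (h v) - (((m:K)+1) * m) • (f ^ m) v := by
  intro m
  induction m with
  | zero => simp [hef, hev]
  | succ m ih =>
    have hp : (f ^ (m+1+1)) v = f ((f ^ (m+1)) v) := by
      rw [pow_succ' f (m+1)]; rfl
    rw [hp, hef, ih]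
    have hh := aux_h_string h f hr (m+1) v
    rw [map_sub, map_smul, map_smul, hh]
    have hfp : f ((f ^ m) (h v)) = (f ^ (m+1)) (h v) := by
      rw [pow_succ' f m]; rfl
    have hfp2 : f ((f ^ m) v) = (f ^ (m+1)) v := by
      rw [pow_succ' f m]; rfl
    rw [hfp, hfp2]
    push_cast
    match_scalars <;> ring

/-- parity of σ on strings -/
lemma aux_sigma_pow (σ f : Module.End K V) (hsf : ∀ x, σ (f x) = - f (σ x)) :
    ∀ (m : ℕ) (x : V), σ ((f ^ m) x) = ((-1:K) ^ m) • (f ^ m) (σ x) := by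
  intro m
  induction m with
  | zero => intro x; simp
  | succ m ih =>
    intro x
    have hp : (f ^ (m+1)) x = f ((f ^ m) x) := by rw [pow_succ' f m]; rfl
    have hp2 : (f ^ (m+1)) (σ x) = f ((f ^ m) (σ x)) := by rw [pow_succ' f m]; rfl
    rw [hp, hsf, ih, hp2, map_smul, pow_succ]
    rw [mul_smul]
    simp

lemma aux_pow_mem (f : Module.End K V) (W : Submodule K V) (hf : ∀ x ∈ W, f x ∈ W) :
    ∀ (m : ℕ), ∀ x ∈ W, (f ^ m) x ∈ W := by
  intro m
  induction m with
  | zero => intro x hx; simpa using hx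
  | succ m ih =>
    intro x hx
    have : (f ^ (m+1)) x = (f ^ m) (f x) := by rw [pow_succ]; rfl
    rw [this]
    exact ih _ (hf x hx)

lemma aux_kervec (e : Module.End K V) (W : Submodule K V) (hWe : ∀ x ∈ W, e x ∈ W) :
    ∀ (M : ℕ) (w : V), w ∈ W → w ≠ 0 → (e ^ M) w = 0 →
      ∃ z ∈ W, z ≠ 0 ∧ e z = 0 := by
  intro M
  induction M with
  | zero => intro w hw hw0 h0; simp at h0; exact absurd h0 hw0
  | succ M ih =>
    intro w hw hw0 h0
    by_cases hez : e w = 0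
    · exact ⟨w, hw, hw0, hez⟩
    · refine ih (e w) (hWe w hw) hez ?_
      have : (e ^ (M+1)) w = (e ^ M) (e w) := by rw [pow_succ]; rfl
      rw [← this, h0]

lemma aux_prim (e h f : Module.End K V)
    (hef : ∀ x, e (f x) = f (e x) + h x)
    (hr : h * f - f * h = (-2:K) • f)
    (phe : ∀ x, e (h x) = h (e x) - (2:K) • e x)
    (W : Submodule K V) (hWh : ∀ x ∈ W, h x ∈ W) :
    ∀ (m : ℕ) (z : V), z ∈ W → e z = 0 → (f ^ m) z = 0 → z ≠ 0 →
      ∃ (n : ℕ) (w : V), w ∈ W ∧ e w = 0 ∧ w ≠ 0 ∧ h w = (n : K) • w := by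
  intro m
  induction m with
  | zero => intro z _ _ h0 hz0; simp at h0; exact absurd h0 hz0
  | succ m ih =>
    intro z hzW hze hzf hz0
    by_cases hy : h z - (m : K) • z = 0
    · exact ⟨m, z, hzW, hze, hz0, by rw [← sub_eq_zero]; exact hy⟩
    · refine ih (h z - (m:K) • z) (W.sub_mem (hWh z hzW) (W.smul_mem _ hzW)) ?_ ?_ hy
      · rw [map_sub, map_smul, phe, hze]
        simp
      · -- f^m (h z - m•z) = 0
        have hid := aux_ef_string e h f hef hr hze m
        rw [hzf, map_zero] at hid
        have h2 : ((m:K)+1) • ((f ^ m) (h z - (m:K) • z)) = 0 := by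
          have hexp : ((m:K)+1) • ((f ^ m) (h z - (m:K) • z))
              = ((m:K)+1) • (f ^ m) (h z) - (((m:K)+1) * (m:K)) • (f ^ m) z := by
            rw [map_sub, map_smul]
            match_scalars <;> ring
          rw [hexp, ← hid]
        have h3 : ((m:K)+1) ≠ 0 := Nat.cast_add_one_ne_zero m
        rw [smul_eq_zero] at h2
        tauto

lemma aux_span_inv (T : Module.End K V) (s : Set V)
    (hs : ∀ x ∈ s, T x ∈ Submodule.span K s) :
    ∀ x ∈ Submodule.span K s, T x ∈ Submodule.span K s := by
  intro x hx
  induction hx using Submodule.span_induction with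
  | mem x hx => exact hs x hx
  | zero => simpa using Submodule.zero_mem _
  | add x y _ _ ihx ihy => rw [map_add]; exact Submodule.add_mem _ ihx ihy
  | smul a x _ ih => rw [map_smul]; exact Submodule.smul_mem _ a ih

end Aux

/-- Every irreducible finite-dimensional Z/2Z-graded representation of sl2
(h even, e and f odd) is irreducible as an ungraded representation. -/
theorem stmt7 {K V : Type*} [Field K] [CharZero K] [AddCommGroup V] [Module K V]
    [FiniteDimensional K V] [Nontrivial V]
    (e h f : Module.End K V) (hrel : Sl2Rel e h f)
    (V0 V1 : Submodule K V) (hgr : Sl2Grading e h f V0 V1)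
    (hirr : ∀ W : Submodule K V, Sl2Inv e h f W → Sl2GradedSub V0 V1 W →
      W = ⊥ ∨ W = ⊤) :
    ∀ W : Submodule K V, Sl2Inv e h f W → W = ⊥ ∨ W = ⊤ := by
  classical
  obtain ⟨hr1, hr2, hr3⟩ := hrel
  obtain ⟨hcompl, hh0, hh1, he0, he1, hf0, hf1⟩ := hgr
  have r1 : h * e - e * h = (2:K) • e := by rw [hr1, two_smul, two_smul]
  have r2 : h * f - f * h = (-2:K) • f := by rw [hr2, two_smul, neg_smul, two_smul, neg_add]
  -- pointwise forms
  have pef : ∀ x, e (f x) = f (e x) + h x := by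
    intro x
    have := LinearMap.congr_fun hr3 x
    simp only [LinearMap.sub_apply, Module.End.mul_apply] at this
    rw [← this]; abel
  have phe : ∀ x, e (h x) = h (e x) - (2:K) • e x := by
    intro x
    have := LinearMap.congr_fun r1 x
    simp only [LinearMap.sub_apply, Module.End.mul_apply, LinearMap.smul_apply] at this
    rw [← this]; abel
  -- nilpotency
  obtain ⟨Me, hMe⟩ := aux_nilp h e (2:K) two_ne_zero r1
  obtain ⟨Mf, hMf⟩ := aux_nilp h f (-2:K) (by norm_num) r2
  -- the grading involution σ
  set π0 : V →ₗ[K] V := V0.subtype ∘ₗ (V0.projectionOnto V1 hcompl) with hπ0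
  set π1 : V →ₗ[K] V := V1.subtype ∘ₗ (V1.projectionOnto V0 hcompl.symm) with hπ1
  have hdecomp : ∀ x : V, π0 x + π1 x = x := fun x =>
    Submodule.projection_add_projection_eq_self hcompl x
  have hπ0mem : ∀ x, π0 x ∈ V0 := fun x => (V0.projectionOnto V1 hcompl x).2
  have hπ1mem : ∀ x, π1 x ∈ V1 := fun x => (V1.projectionOnto V0 hcompl.symm x).2
  have hπ00 : ∀ x ∈ V0, π0 x = x := by
    intro x hx
    show (V0.subtype) (V0.projectionOnto V1 hcompl x) = x
    rw [show x = ((⟨x, hx⟩ : V0) : V) from rfl, Submodule.projectionOnto_apply_left hcompl]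
    rfl
  have hπ10 : ∀ x ∈ V0, π1 x = 0 := by
    intro x hx
    show (V1.subtype) (V1.projectionOnto V0 hcompl.symm x) = 0
    rw [Submodule.projectionOnto_apply_of_mem_right hcompl.symm hx]
    rfl
  have hπ11 : ∀ x ∈ V1, π1 x = x := by
    intro x hx
    show (V1.subtype) (V1.projectionOnto V0 hcompl.symm x) = x
    rw [show x = ((⟨x, hx⟩ : V1) : V) from rfl,
      Submodule.projectionOnto_apply_left hcompl.symm]
    rfl
  have hπ01 : ∀ x ∈ V1, π0 x = 0 := by
    intro x hx
    show (V0.subtype) (V0.projectionOnto V1 hcompl x) = 0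
    rw [Submodule.projectionOnto_apply_of_mem_right hcompl hx]
    rfl
  set σ : Module.End K V := π0 - π1 with hσdef
  have hσ : ∀ x, σ x = π0 x - π1 x := fun x => rfl
  have hσ0 : ∀ x ∈ V0, σ x = x := by
    intro x hx; rw [hσ, hπ00 x hx, hπ10 x hx, sub_zero]
  have hσ1 : ∀ x ∈ V1, σ x = -x := by
    intro x hx; rw [hσ, hπ01 x hx, hπ11 x hx, zero_sub]
  have hσσ : ∀ x, σ (σ x) = x := by
    intro x
    calc σ (σ x) = σ (π0 x) - σ (π1 x) := by rw [hσ x, map_sub]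
      _ = π0 x + π1 x := by
          rw [hσ0 _ (hπ0mem x), hσ1 _ (hπ1mem x), sub_neg_eq_add]
      _ = x := hdecomp x
  have hσinj : Function.Injective σ := Function.LeftInverse.injective hσσ
  have keyodd : ∀ (T : Module.End K V), (∀ x ∈ V0, T x ∈ V1) → (∀ x ∈ V1, T x ∈ V0) →
      ∀ x, σ (T x) = - T (σ x) := by
    intro T hT0 hT1 x
    conv_lhs => rw [← hdecomp x]
    rw [map_add, map_add, hσ1 _ (hT0 _ (hπ0mem x)), hσ0 _ (hT1 _ (hπ1mem x)), hσ x, map_sub]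
    abel
  have keyh : ∀ x, σ (h x) = h (σ x) := by
    intro x
    conv_lhs => rw [← hdecomp x]
    rw [map_add, map_add, hσ0 _ (hh0 _ (hπ0mem x)), hσ1 _ (hh1 _ (hπ1mem x)), hσ x, map_sub]
    abel
  have pse : ∀ x, σ (e x) = - e (σ x) := keyodd e he0 he1
  have psf : ∀ x, σ (f x) = - f (σ x) := keyodd f hf0 hf1
  have hmem0 : ∀ x, x + σ x ∈ V0 := by
    intro x
    have hx : x + σ x = π0 x + π0 x := by
      calc x + σ x = (π0 x + π1 x) + (π0 x - π1 x) := by rw [hdecomp x, ← hσ x]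
        _ = π0 x + π0 x := by abel
    rw [hx]; exact V0.add_mem (hπ0mem x) (hπ0mem x)
  have hmem1 : ∀ x, x - σ x ∈ V1 := by
    intro x
    have hx : x - σ x = π1 x + π1 x := by
      calc x - σ x = (π0 x + π1 x) - (π0 x - π1 x) := by rw [hdecomp x, ← hσ x]
        _ = π1 x + π1 x := by abel
    rw [hx]; exact V1.add_mem (hπ1mem x) (hπ1mem x)
  have hgraded : ∀ U : Submodule K V, (∀ x ∈ U, σ x ∈ U) → Sl2GradedSub V0 V1 U := by
    intro U hU
    apply le_antisymm
    · intro x hx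
      have hx2 : ((2:K)⁻¹) • (x + σ x) ∈ U ⊓ V0 :=
        ⟨U.smul_mem _ (U.add_mem hx (hU x hx)), V0.smul_mem _ (hmem0 x)⟩
      have hx3 : ((2:K)⁻¹) • (x - σ x) ∈ U ⊓ V1 :=
        ⟨U.smul_mem _ (U.sub_mem hx (hU x hx)), V1.smul_mem _ (hmem1 x)⟩
      have hxeq : x = (2:K)⁻¹ • (x + σ x) + (2:K)⁻¹ • (x - σ x) := by
        rw [← smul_add]
        have : (x + σ x) + (x - σ x) = (2:K) • x := by
          rw [two_smul]; abel
        rw [this, smul_smul, inv_mul_cancel₀ (two_ne_zero), one_smul]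
      rw [hxeq]
      exact Submodule.add_mem_sup hx2 hx3
    · exact sup_le inf_le_left inf_le_left
  -- main argument
  intro W hW
  obtain ⟨hWe, hWh, hWf⟩ := hW
  by_cases hWbot : W = ⊥
  · exact Or.inl hWbot
  set Wσ : Submodule K V := W.map σ with hWσdef
  have hWσmem : ∀ x ∈ W, σ x ∈ Wσ := fun x hx => Submodule.mem_map_of_mem hx
  have hWσW : ∀ y ∈ Wσ, σ y ∈ W := by
    intro y hy
    obtain ⟨x, hx, rfl⟩ := Submodule.mem_map.1 hy
    rw [hσσ]; exact hx
  have hWσinv : Sl2Inv e h f Wσ := by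
    refine ⟨?_, ?_, ?_⟩ <;> intro y hy <;> obtain ⟨x, hx, rfl⟩ := Submodule.mem_map.1 hy
    · have hx2 : e (σ x) = σ (-(e x)) := by rw [map_neg, pse x, neg_neg]
      rw [hx2]; exact Submodule.mem_map_of_mem (W.neg_mem (hWe x hx))
    · rw [← keyh x]; exact Submodule.mem_map_of_mem (hWh x hx)
    · have hx2 : f (σ x) = σ (-(f x)) := by rw [map_neg, psf x, neg_neg]
      rw [hx2]; exact Submodule.mem_map_of_mem (W.neg_mem (hWf x hx))
  -- invariance and σ-stability of intersection and sum
  have hAinv : Sl2Inv e h f (W ⊓ Wσ) :=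
    ⟨fun x hx => ⟨hWe x hx.1, hWσinv.1 x hx.2⟩,
     fun x hx => ⟨hWh x hx.1, hWσinv.2.1 x hx.2⟩,
     fun x hx => ⟨hWf x hx.1, hWσinv.2.2 x hx.2⟩⟩
  have hAσ : ∀ x ∈ W ⊓ Wσ, σ x ∈ W ⊓ Wσ := fun x hx => ⟨hWσW x hx.2, hWσmem x hx.1⟩
  have hBinv : Sl2Inv e h f (W ⊔ Wσ) := by
    refine ⟨?_, ?_, ?_⟩ <;> intro x hx <;>
      obtain ⟨a, ha, b, hb, rfl⟩ := Submodule.mem_sup.1 hx <;> rw [map_add]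
    · exact Submodule.add_mem _ (Submodule.mem_sup_left (hWe a ha))
        (Submodule.mem_sup_right (hWσinv.1 b hb))
    · exact Submodule.add_mem _ (Submodule.mem_sup_left (hWh a ha))
        (Submodule.mem_sup_right (hWσinv.2.1 b hb))
    · exact Submodule.add_mem _ (Submodule.mem_sup_left (hWf a ha))
        (Submodule.mem_sup_right (hWσinv.2.2 b hb))
  have hBσ : ∀ x ∈ W ⊔ Wσ, σ x ∈ W ⊔ Wσ := by
    intro x hx
    obtain ⟨a, ha, b, hb, rfl⟩ := Submodule.mem_sup.1 hx
    rw [map_add]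
    exact Submodule.add_mem _ (Submodule.mem_sup_right (hWσmem a ha))
      (Submodule.mem_sup_left (hWσW b hb))
  rcases hirr (W ⊓ Wσ) hAinv (hgraded _ hAσ) with hA | hA
  swap
  · right
    rw [eq_top_iff, ← hA]
    exact inf_le_left
  rcases hirr (W ⊔ Wσ) hBinv (hgraded _ hBσ) with hB | hB
  · left
    rw [eq_bot_iff, ← hB]
    exact le_sup_left
  exfalso
  -- pick a nonzero vector of W killed by e
  obtain ⟨w1, hw1W, hw10, hw1e⟩ := aux_kervec e W hWe Me _
    ((Submodule.ne_bot_iff W).1 hWbot).choose_spec.1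
    ((Submodule.ne_bot_iff W).1 hWbot).choose_spec.2
    (by rw [hMe]; rfl)
  -- a primitive vector in W
  obtain ⟨n, w, hwW, hwe, hw0, hwh⟩ := aux_prim e h f pef r2 phe W hWh Mf w1 hw1W hw1e
    (by rw [hMf]; rfl) hw10
  -- the symmetrized vector v
  set v : V := w + σ w with hv
  have hσw : e (σ w) = 0 := by
    have := pse w
    rw [hwe, map_zero] at this
    exact neg_eq_zero.1 this.symm
  have hve : e v = 0 := by rw [hv, map_add, hwe, hσw, add_zero]
  have hvh : h v = (n:K) • v := by
    rw [hv, map_add, hwh, ← keyh w, hwh, map_smul, smul_add]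
  have hvσ : σ v = v := by
    rw [hv, map_add, hσσ]
    abel
  have hv0 : v ≠ 0 := by
    intro h0
    have hsw : σ w = -w := eq_neg_of_add_eq_zero_right h0
    have hwWσ : w ∈ Wσ := by
      have h2 := Wσ.neg_mem (hWσmem w hwW)
      rw [hsw, neg_neg] at h2
      exact h2
    have : w ∈ W ⊓ Wσ := ⟨hwW, hwWσ⟩
    rw [hA] at this
    exact hw0 ((Submodule.mem_bot K).1 this)
  -- the length of the f-string through v
  have hfex : ∃ m, (f ^ m) v = 0 := ⟨Mf, by rw [hMf]; rfl⟩
  have hm0pos : Nat.find hfex ≠ 0 := by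
    intro h0
    have := Nat.find_spec hfex
    rw [h0] at this
    simp at this
    exact hv0 this
  obtain ⟨j, hj⟩ : ∃ j, Nat.find hfex = j + 1 := ⟨Nat.find hfex - 1, by omega⟩
  have hfj1 : (f ^ (j+1)) v = 0 := by rw [← hj]; exact Nat.find_spec hfex
  have hfk : ∀ k : ℕ, k ≤ j → (f ^ k) v ≠ 0 := by
    intro k hk
    exact Nat.find_min hfex (by omega)
  -- the graded invariant submodule M
  set g : Fin (j+1) → V := fun k => (f ^ (k:ℕ)) v with hg
  set M : Submodule K V := Submodule.span K (Set.range g) with hMdef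
  have hgen : ∀ k : ℕ, k < j + 1 → (f ^ k) v ∈ M :=
    fun k hk => Submodule.subset_span ⟨⟨k, hk⟩, rfl⟩
  have hvM : v ∈ M := by
    have := hgen 0 (by omega)
    simpa using this
  have hMf' : ∀ x ∈ Set.range g, f x ∈ M := by
    rintro x ⟨⟨k, hk⟩, rfl⟩
    have hfx : f (g ⟨k, hk⟩) = (f ^ (k+1)) v := by
      rw [hg]
      show f ((f ^ k) v) = (f ^ (k+1)) v
      rw [pow_succ' f k]; rfl
    rw [hfx]
    by_cases hkj : k = j
    · rw [hkj, hfj1]; exact M.zero_mem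
    · exact hgen (k+1) (by omega)
  have hMh : ∀ x ∈ Set.range g, h x ∈ M := by
    rintro x ⟨⟨k, hk⟩, rfl⟩
    have hhx : h (g ⟨k, hk⟩) = ((n:K) - 2*k) • (f ^ k) v := by
      rw [hg]
      show h ((f ^ k) v) = ((n:K) - 2*k) • (f ^ k) v
      rw [aux_h_string h f r2 k v, hvh, map_smul, sub_smul]
    rw [hhx]
    exact M.smul_mem _ (hgen k hk)
  have hMe' : ∀ x ∈ Set.range g, e x ∈ M := by
    rintro x ⟨⟨k, hk⟩, rfl⟩
    match k, hk with
    | 0, hk =>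
      have : e (g ⟨0, hk⟩) = 0 := by
        rw [hg]
        show e ((f ^ 0) v) = 0
        simpa using hve
      rw [this]; exact M.zero_mem
    | (k+1), hk =>
      have : e (g ⟨k+1, hk⟩) = (((k:K)+1) * ((n:K) - k)) • (f ^ k) v := by
        rw [hg]
        show e ((f ^ (k+1)) v) = (((k:K)+1) * ((n:K) - k)) • (f ^ k) v
        rw [aux_ef_string e h f pef r2 hve k, hvh, map_smul]
        match_scalars
        ring
      rw [this]
      exact M.smul_mem _ (hgen k (by omega))
  have hMσ : ∀ x ∈ M, σ x ∈ M := by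
    apply aux_span_inv
    rintro x ⟨⟨k, hk⟩, rfl⟩
    have : σ (g ⟨k, hk⟩) = ((-1:K) ^ k) • (f ^ k) v := by
      rw [hg]
      show σ ((f ^ k) v) = ((-1:K) ^ k) • (f ^ k) v
      rw [aux_sigma_pow σ f psf k v, hvσ]
    rw [this]
    exact M.smul_mem _ (hgen k hk)
  have hMinv : Sl2Inv e h f M :=
    ⟨aux_span_inv e _ hMe', aux_span_inv h _ hMh, aux_span_inv f _ hMf'⟩
  rcases hirr M hMinv (hgraded M hMσ) with hMbot | hMtop
  · rw [hMbot] at hvM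
    exact hv0 ((Submodule.mem_bot K).1 hvM)
  -- dimension count
  have hdimV : Module.finrank K V ≤ j + 1 := by
    have := finrank_le_of_span_eq_top (v := g) (by rw [← hMdef]; exact hMtop)
    simpa using this
  -- eigenvectors inside W
  have hfkw : ∀ k : ℕ, k ≤ j → (f ^ k) w ≠ 0 := by
    intro k hk hzero
    apply hfk k hk
    have h1 : (f ^ k) (σ w) = 0 := by
      have h2 := aux_sigma_pow σ f psf k w
      rw [hzero, map_zero] at h2
      have h3 : ((-1:K) ^ k) • (f ^ k) (σ w) = 0 := h2.symm
      rw [smul_eq_zero] at h3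
      rcases h3 with h3 | h3
      · exact absurd h3 (pow_ne_zero k (by norm_num))
      · exact h3
    rw [hv, map_add, hzero, h1, add_zero]
  have heig : ∀ k : Fin (j+1), h.HasEigenvector ((n:K) - 2*(k:ℕ)) ((f ^ (k:ℕ)) w) := by
    intro k
    refine ⟨Module.End.mem_eigenspace_iff.2 ?_, hfkw k (by omega)⟩
    rw [aux_h_string h f r2 (k:ℕ) w, hwh, map_smul, sub_smul]
  have hinj2 : Function.Injective (fun k : Fin (j+1) => (n:K) - 2*(k:ℕ)) := by
    intro a b hab
    simp only [sub_right_inj] at hab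
    have := mul_left_cancel₀ (two_ne_zero (α := K)) hab
    exact Fin.ext (Nat.cast_inj.1 this)
  have hliW := h.eigenvectors_linearIndependent' _ hinj2 _ heig
  have hdimW : j + 1 ≤ Module.finrank K W := by
    set u' : Fin (j+1) → W := fun k => ⟨(f ^ (k:ℕ)) w, aux_pow_mem f W hWf _ w hwW⟩ with hu'
    have hli' : LinearIndependent K u' := by
      apply LinearIndependent.of_comp W.subtype
      exact hliW
    have := hli'.fintype_card_le_finrank
    simpa using this
  -- eigenvectors inside Wσ
  have heig2 : ∀ k : Fin (j+1), h.HasEigenvector ((n:K) - 2*(k:ℕ)) (σ ((f ^ (k:ℕ)) w)) := by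
    intro k
    refine ⟨Module.End.mem_eigenspace_iff.2 ?_, ?_⟩
    · rw [← keyh, aux_h_string h f r2 (k:ℕ) w, hwh, map_smul, sub_smul, map_sub, map_smul,
        map_smul]
    · intro h0
      exact hfkw k (by omega) (hσinj (by rw [h0, map_zero]))
  have hliWσ := h.eigenvectors_linearIndependent' _ hinj2 _ heig2
  have hdimWσ : j + 1 ≤ Module.finrank K Wσ := by
    set u2 : Fin (j+1) → Wσ := fun k =>
      ⟨σ ((f ^ (k:ℕ)) w), Submodule.mem_map_of_mem (aux_pow_mem f W hWf _ w hwW)⟩ with hu2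
    have hli2 : LinearIndependent K u2 := by
      apply LinearIndependent.of_comp Wσ.subtype
      exact hliWσ
    have := hli2.fintype_card_le_finrank
    simpa using this
  -- conclude
  have hsum := Submodule.finrank_sup_add_finrank_inf_eq W Wσ
  rw [hA, hB, finrank_top, finrank_bot, add_zero] at hsum
  omega
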